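/- Let G be an amply regular graph with parameters (n, d, α, β) such that 2β - α ≥ d + 1. Then for every edge xy ∈ E, the bipartite graph B on parts N_x and N_y with edges {vw : v ∈ N_x, w ∈ N_y, vw ∈ E(G)} has minimum degree at least β - α - 1 ≥ (d - α - 1)/2 = |N_x|/2, and hence B has a perfect matching. -/

import Mathlib

variable {V : Type*}

/-- An amply regular graph with parameters `(n, d, a, b)`. -/
def IsAmplyRegular (G : SimpleGraph V) [Fintype V] [DecidableEq V] [DecidableRel G.Adj]
    (n d a b : ℕ) : Prop :=
  Fintype.card V = n ∧ G.IsRegularOfDegree d ∧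
  (∀ x y : V, G.Adj x y → (G.neighborFinset x ∩ G.neighborFinset y).card = a) ∧
  (∀ x y : V, G.dist x y = 2 → (G.neighborFinset x ∩ G.neighborFinset y).card = b)

/-- `N_x = Γ(x) \\ ({y} ∪ Γ(y))`: the neighbors of `x` other than `y` and not adjacent
to `y`. (`N_y` is `Nside G y x`.) -/
def Nside (G : SimpleGraph V) [Fintype V] [DecidableEq V] [DecidableRel G.Adj] (x y : V) :
    Finset V := G.neighborFinset x \ insert y (G.neighborFinset y)

/-- `Δ_{xy} = Γ(x) ∩ Γ(y)`: the common neighbors of `x` and `y`. -/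
def Delta (G : SimpleGraph V) [Fintype V] [DecidableEq V] [DecidableRel G.Adj] (x y : V) :
    Finset V := G.neighborFinset x ∩ G.neighborFinset y

/-- The bipartite graph between `N_x` and `N_y` induced by `G`. -/
def localBip (G : SimpleGraph V) [Fintype V] [DecidableEq V] [DecidableRel G.Adj]
    (x y : V) : SimpleGraph {v : V // v ∈ Nside G x y ∪ Nside G y x} where
  Adj a b := G.Adj a.1 b.1 ∧
    ((a.1 ∈ Nside G x y ∧ b.1 ∈ Nside G y x) ∨ (a.1 ∈ Nside G y x ∧ b.1 ∈ Nside G x y))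
  symm := ⟨by
    rintro a b ⟨hadj, h | h⟩
    · exact ⟨hadj.symm, Or.inr ⟨h.2, h.1⟩⟩
    · exact ⟨hadj.symm, Or.inl ⟨h.2, h.1⟩⟩⟩
  loopless := ⟨fun a h => G.irrefl h.1⟩

noncomputable instance (G : SimpleGraph V) [Fintype V] [DecidableEq V] [DecidableRel G.Adj]
    (x y : V) (a : {v : V // v ∈ Nside G x y ∪ Nside G y x}) :
    Fintype ((localBip G x y).neighborSet a) := Fintype.ofFinite _

section helpers
variable [Fintype V] [DecidableEq V] (G : SimpleGraph V) [DecidableRel G.Adj]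

lemma Nside_disjoint (x y : V) : Disjoint (Nside G x y) (Nside G y x) := by
  rw [Finset.disjoint_left]
  rintro v hv hv'
  rw [Nside, Finset.mem_sdiff] at hv hv'
  exact hv'.2 (Finset.mem_insert_of_mem hv.1)

lemma Nside_card {d a : ℕ} {x y : V} (hreg : G.IsRegularOfDegree d)
    (ha : (G.neighborFinset x ∩ G.neighborFinset y).card = a) (hxy : G.Adj x y) :
    (Nside G x y).card = d - a - 1 := by
  have h1 : G.neighborFinset x ∩ insert y (G.neighborFinset y)
      = insert y (G.neighborFinset x ∩ G.neighborFinset y) :=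
    Finset.inter_insert_of_mem (by simpa using hxy)
  have hy : y ∉ G.neighborFinset x ∩ G.neighborFinset y := by
    simp [SimpleGraph.mem_neighborFinset]
  have h2 : (G.neighborFinset x ∩ insert y (G.neighborFinset y)).card = a + 1 := by
    rw [h1, Finset.card_insert_of_notMem hy, ha]
  have h3 : Nside G x y = G.neighborFinset x \
      (G.neighborFinset x ∩ insert y (G.neighborFinset y)) := by
    rw [Finset.sdiff_inter_self_left]; rfl
  have hd : (G.neighborFinset x).card = d := hreg x
  rw [h3, Finset.card_sdiff_of_subset (Finset.inter_subset_left), h2, hd]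
  omega

lemma deg_lower {a b : ℕ} {x y : V}
    (hα : ∀ u v : V, G.Adj u v → (G.neighborFinset u ∩ G.neighborFinset v).card = a)
    (hβ : ∀ u v : V, G.dist u v = 2 → (G.neighborFinset u ∩ G.neighborFinset v).card = b)
    (hxy : G.Adj x y) (v : V) (hv : v ∈ Nside G x y) :
    b - a - 1 ≤ ((Nside G y x).filter (fun w => G.Adj v w)).card := by
  rw [Nside, Finset.mem_sdiff, SimpleGraph.mem_neighborFinset, Finset.mem_insert,
    SimpleGraph.mem_neighborFinset] at hv
  obtain ⟨hvx, hvy⟩ := hv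
  push_neg at hvy
  have hdist : G.dist v y = 2 := by
    have p : G.Walk v y := .cons hvx.symm (.cons hxy .nil)
    have h2 : G.dist v y ≤ 2 := by
      simpa using SimpleGraph.dist_le (.cons hvx.symm (.cons hxy .nil))
    have h0 : G.dist v y ≠ 0 :=
      SimpleGraph.dist_ne_zero_iff_ne_and_reachable.mpr ⟨hvy.1, ⟨p⟩⟩
    have h1 : G.dist v y ≠ 1 := fun h =>
      hvy.2 (SimpleGraph.dist_eq_one_iff_adj.mp h).symm
    omega
  have hb := hβ v y hdist
  have hsub : G.neighborFinset v ∩ G.neighborFinset y ⊆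
      insert x ((G.neighborFinset v ∩ G.neighborFinset x) ∪
        ((Nside G y x).filter (fun w => G.Adj v w))) := by
    intro w hw
    rw [Finset.mem_inter, SimpleGraph.mem_neighborFinset, SimpleGraph.mem_neighborFinset] at hw
    obtain ⟨hwv, hwy⟩ := hw
    rw [Finset.mem_insert]
    by_cases hwx : w = x
    · exact Or.inl hwx
    right
    rw [Finset.mem_union]
    by_cases hadj : G.Adj x w
    · exact Or.inl (by simp [SimpleGraph.mem_neighborFinset, hwv, hadj])
    · refine Or.inr (Finset.mem_filter.mpr ⟨?_, hwv⟩)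
      rw [Nside, Finset.mem_sdiff, Finset.mem_insert]
      simp [SimpleGraph.mem_neighborFinset, hwy, hwx, hadj]
  have hcard := Finset.card_le_card hsub
  have h4 : (insert x ((G.neighborFinset v ∩ G.neighborFinset x) ∪
        ((Nside G y x).filter (fun w => G.Adj v w)))).card ≤
      1 + ((G.neighborFinset v ∩ G.neighborFinset x).card +
        ((Nside G y x).filter (fun w => G.Adj v w)).card) := by
    refine (Finset.card_insert_le _ _).trans ?_
    have := Finset.card_union_le (G.neighborFinset v ∩ G.neighborFinset x)
      ((Nside G y x).filter (fun w => G.Adj v w))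
    omega
  have ha := hα v x hvx.symm
  omega

end helpers


/-- If `2β - α ≥ d + 1`, then the bipartite graph between `N_x` and `N_y` has minimum
degree at least `β - α - 1 ≥ (d - α - 1)/2 = |N_x|/2`, and hence a perfect matching. -/
theorem stmt10 [Fintype V] [DecidableEq V] (G : SimpleGraph V) [DecidableRel G.Adj]
    (n d α β : ℕ) (h : IsAmplyRegular G n d α β) (hcond : d + 1 ≤ 2 * β - α)
    (x y : V) (hxy : G.Adj x y) :
    (∀ a, β - α - 1 ≤ (localBip G x y).degree a) ∧
    d - α - 1 ≤ 2 * (β - α - 1) ∧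
    ∃ M : (localBip G x y).Subgraph, M.IsPerfectMatching := by
  obtain ⟨-, hreg, hα, hβ⟩ := h
  have hdisj : Disjoint (Nside G x y) (Nside G y x) := Nside_disjoint G x y
  have hcardA : (Nside G x y).card = d - α - 1 := Nside_card G hreg (hα x y hxy) hxy
  have hcardB : (Nside G y x).card = d - α - 1 := Nside_card G hreg (hα y x hxy.symm) hxy.symm
  have hdegA : ∀ v ∈ Nside G x y,
      β - α - 1 ≤ ((Nside G y x).filter (fun w => G.Adj v w)).card :=
    fun v hv => deg_lower G hα hβ hxy v hv
  have hdegB : ∀ v ∈ Nside G y x,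
      β - α - 1 ≤ ((Nside G x y).filter (fun w => G.Adj v w)).card :=
    fun v hv => deg_lower G hα hβ hxy.symm v hv
  have hm : d - α - 1 ≤ 2 * (β - α - 1) := by omega
  -- Part 1: degree bound
  have hdeg : ∀ a, β - α - 1 ≤ (localBip G x y).degree a := by
    intro a
    have ha := a.2
    rw [Finset.mem_union] at ha
    have key : ∀ (S : Finset V) (hS : ∀ w ∈ S, w ∈ Nside G x y ∪ Nside G y x)
        (hadj : ∀ w ∈ S, ∀ (hw : w ∈ Nside G x y ∪ Nside G y x),
          (localBip G x y).Adj a ⟨w, hw⟩),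
        S.card ≤ (localBip G x y).degree a := by
      intro S hS hadj
      rw [SimpleGraph.degree]
      apply Finset.card_le_card_of_injOn
        (fun w => if hw : w ∈ Nside G x y ∪ Nside G y x then ⟨w, hw⟩ else a)
      · intro w hw
        simp only [Finset.mem_coe, dif_pos (hS w hw), SimpleGraph.mem_neighborFinset]
        exact hadj w hw (hS w hw)
      · intro w1 h1 w2 h2 he
        simp only [dif_pos (hS w1 h1), dif_pos (hS w2 h2)] at he
        exact congrArg Subtype.val he
    rcases ha with hA | hB
    · refine (hdegA a.1 hA).trans (key _ ?_ ?_)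
      · intro w hw
        exact Finset.mem_union_right _ (Finset.mem_filter.mp hw).1
      · intro w hw hw'
        obtain ⟨hwB, hwadj⟩ := Finset.mem_filter.mp hw
        exact And.intro hwadj (Or.inl ⟨hA, hwB⟩)
    · refine (hdegB a.1 hB).trans (key _ ?_ ?_)
      · intro w hw
        exact Finset.mem_union_left _ (Finset.mem_filter.mp hw).1
      · intro w hw hw'
        obtain ⟨hwA, hwadj⟩ := Finset.mem_filter.mp hw
        exact And.intro hwadj (Or.inr ⟨hB, hwA⟩)
  refine ⟨hdeg, hm, ?_⟩
  -- Hall condition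
  have hall : ∀ s : Finset {v // v ∈ Nside G x y},
      s.card ≤ (s.biUnion (fun a => (Nside G y x).filter (fun w => G.Adj a.1 w))).card := by
    intro s
    rcases s.eq_empty_or_nonempty with rfl | ⟨a, ha⟩
    · simp
    by_cases hs : s.card ≤ β - α - 1
    · refine hs.trans ((hdegA a.1 a.2).trans (Finset.card_le_card ?_))
      exact Finset.subset_biUnion_of_mem (fun a => (Nside G y x).filter (fun w => G.Adj a.1 w)) ha
    · push_neg at hs
      have hBsub : Nside G y x ⊆
          s.biUnion (fun a => (Nside G y x).filter (fun w => G.Adj a.1 w)) := by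
        intro b hb
        by_contra hbn
        simp only [Finset.mem_biUnion] at hbn
        push_neg at hbn
        have hdisj2 : Disjoint ((Nside G x y).filter (fun v => G.Adj b v))
            (s.image Subtype.val) := by
          rw [Finset.disjoint_left]
          intro v hv hvs
          obtain ⟨a', has, rfl⟩ := Finset.mem_image.mp hvs
          rw [Finset.mem_filter] at hv
          exact hbn a' has (Finset.mem_filter.mpr ⟨hb, hv.2.symm⟩)
        have h1 : ((Nside G x y).filter (fun v => G.Adj b v)).card
            + (s.image Subtype.val).card ≤ (Nside G x y).card := by
          rw [← Finset.card_union_of_disjoint hdisj2]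
          apply Finset.card_le_card
          intro v hv
          rcases Finset.mem_union.mp hv with h' | h'
          · exact (Finset.mem_filter.mp h').1
          · obtain ⟨a', _, rfl⟩ := Finset.mem_image.mp h'
            exact a'.2
        have h2 := hdegB b hb
        have h3 : (s.image Subtype.val).card = s.card :=
          Finset.card_image_of_injective _ Subtype.val_injective
        omega
      have h4 := Finset.card_le_card hBsub
      have h5 : s.card ≤ (Nside G x y).card := by
        have := Finset.card_le_univ s
        rwa [Fintype.card_coe] at this

      omega
  obtain ⟨f, hfinj, hf⟩ := (Finset.all_card_le_biUnion_card_iff_exists_injective _).mp hall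
  have hfB : ∀ a, f a ∈ Nside G y x := fun a => (Finset.mem_filter.mp (hf a)).1
  have hfadj : ∀ a, G.Adj a.1 (f a) := fun a => (Finset.mem_filter.mp (hf a)).2
  have himg : Finset.image f Finset.univ = Nside G y x := by
    apply Finset.eq_of_subset_of_card_le
    · intro b hb
      obtain ⟨a, -, rfl⟩ := Finset.mem_image.mp hb
      exact hfB a
    · rw [Finset.card_image_of_injective _ hfinj, Finset.card_univ, Fintype.card_coe,
        hcardA, hcardB]
  refine ⟨{ verts := Set.univ
            Adj := fun u w => (∃ h : u.1 ∈ Nside G x y, w.1 = f ⟨u.1, h⟩)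
              ∨ (∃ h : w.1 ∈ Nside G x y, u.1 = f ⟨w.1, h⟩)
            adj_sub := ?_
            edge_vert := fun _ => trivial
            symm := ⟨fun u w hw => hw.symm⟩ }, ?_⟩
  · rintro u w (⟨hu, hw⟩ | ⟨hw, hu⟩)
    · refine ⟨?_, Or.inl ⟨hu, ?_⟩⟩
      · rw [hw]; exact hfadj ⟨u.1, hu⟩
      · rw [hw]; exact hfB ⟨u.1, hu⟩
    · refine ⟨?_, Or.inr ⟨?_, hw⟩⟩
      · rw [hu]; exact (hfadj ⟨w.1, hw⟩).symm
      · rw [hu]; exact hfB ⟨w.1, hw⟩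
  · rw [SimpleGraph.Subgraph.isPerfectMatching_iff]
    intro v
    have hv := v.2
    rw [Finset.mem_union] at hv
    rcases hv with hvA | hvB
    · refine ⟨⟨f ⟨v.1, hvA⟩, Finset.mem_union_right _ (hfB ⟨v.1, hvA⟩)⟩,
        Or.inl ⟨hvA, rfl⟩, ?_⟩
      rintro w (⟨h1, heq⟩ | ⟨h2, heq⟩)
      · exact Subtype.ext heq
      · have hvB' : v.1 ∈ Nside G y x := by rw [heq]; exact hfB _
        exact absurd hvB' (Finset.disjoint_left.mp hdisj hvA)
    · have hex : ∃ a : {v // v ∈ Nside G x y}, f a = v.1 := by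
        have hmem : v.1 ∈ Finset.image f Finset.univ := by rw [himg]; exact hvB
        obtain ⟨a, -, ha⟩ := Finset.mem_image.mp hmem
        exact ⟨a, ha⟩
      obtain ⟨a, hav⟩ := hex
      refine ⟨⟨a.1, Finset.mem_union_left _ a.2⟩, Or.inr ⟨a.2, hav.symm⟩, ?_⟩
      rintro w (⟨h1, heq⟩ | ⟨h2, heq⟩)
      · exact absurd hvB (Finset.disjoint_left.mp hdisj h1)
      · have hfe : f ⟨w.1, h2⟩ = f a := by rw [← heq, hav]
        have h6 : w.1 = a.1 := congrArg Subtype.val (hfinj hfe)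
        exact Subtype.ext h6
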